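/- Let (a_k)_{k≥0} be a non-negative real sequence, r > 1, and E₁, E₂ > 0 with E₁ < r² − 1. If (1 − E₁/((k+r)² − 1))·a_{k+1} ≤ (E₂/((k+r−1)(k+r)))·a_0 + a_k for all integers k ≥ 0, then there exists a constant E₃ > 0, depending only on E₁, E₂ and r, such that a_k ≤ E₃·a_0 for all k ≥ 1. One may take E₃ = E₄·E₂·∑_{i=0}^∞ (i+r+1)/(((i+r)² − 1 − E₁)·(i+r)) with E₄ = ∏_{j=0}^∞ ((j+r)² − 1)/((j+r)² − 1 − E₁). -/

import Mathlib

open Filter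

/-- Auxiliary: a sum whose terms beyond the first are bounded by `C/((j+1)(j+2))`
is bounded by `A + C`. -/
lemma sum_tail_bound (f : ℕ → ℝ) (A C : ℝ) (hA : 0 ≤ A) (hC : 0 ≤ C)
    (h0 : f 0 ≤ A) (h : ∀ j : ℕ, f (j+1) ≤ C/(((j:ℝ)+1)*((j:ℝ)+2))) :
    ∀ k, ∑ j ∈ Finset.range k, f j ≤ A + C := by
  have key : ∀ k : ℕ, ∑ j ∈ Finset.range (k+1), f j ≤ A + C - C/((k:ℝ)+1) := by
    intro k
    induction k with
    | zero =>
      simp only [Finset.sum_range_one, Nat.cast_zero]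
      norm_num
      linarith
    | succ n ih =>
      rw [Finset.sum_range_succ]
      have hn : (0:ℝ) < (n:ℝ)+1 := by positivity
      have hn2 : (0:ℝ) < (n:ℝ)+2 := by positivity
      have htel : C/(((n:ℝ)+1)*((n:ℝ)+2)) = C/((n:ℝ)+1) - C/((n:ℝ)+2) := by
        field_simp
        ring
      have hfn := h n
      push_cast
      rw [htel] at hfn
      rw [show ((n:ℝ)+1+1) = (n:ℝ)+2 by ring]
      linarith
  intro k
  cases k with
  | zero => simp; linarith
  | succ n =>
    have := key n
    have hn : (0:ℝ) < (n:ℝ)+1 := by positivity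
    have : C/((n:ℝ)+1) ≥ 0 := by positivity
    linarith [key n]

/-- A non-negative real sequence satisfying the given recursive inequality is uniformly
bounded by a constant multiple of its initial value. -/
theorem seq_uniform_bound
    (r E₁ E₂ : ℝ) (a : ℕ → ℝ)
    (hr : 1 < r) (hE₁ : 0 < E₁) (hE₂ : 0 < E₂) (hE₁' : E₁ < r^2 - 1)
    (ha : ∀ k : ℕ, 0 ≤ a k)
    (hrec : ∀ k : ℕ,
      (1 - E₁/(((k : ℝ) + r)^2 - 1)) * a (k+1)
        ≤ E₂/(((k : ℝ) + r - 1)*((k : ℝ) + r)) * a 0 + a k) :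
    ∃ E₃ : ℝ, 0 < E₃ ∧ ∀ k : ℕ, 1 ≤ k → a k ≤ E₃ * a 0 := by
  set c : ℕ → ℝ := fun j => (((j:ℝ)+r)^2 - 1)/(((j:ℝ)+r)^2 - 1 - E₁) with hc
  set e : ℕ → ℝ := fun j => E₂/(((j:ℝ)+r-1)*((j:ℝ)+r)) with he
  set x : ℕ → ℝ := fun j => E₁/(((j:ℝ)+r)^2 - 1 - E₁) with hx
  have hden : ∀ j : ℕ, 0 < ((j:ℝ)+r)^2 - 1 - E₁ := by
    intro j
    have hj : (0:ℝ) ≤ (j:ℝ) := Nat.cast_nonneg j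
    nlinarith
  have hD : ∀ j : ℕ, 0 < ((j:ℝ)+r)^2 - 1 := by
    intro j; have := hden j; linarith
  have hc_eq : ∀ j, c j = 1 + x j := by
    intro j
    simp only [hc, hx]
    have := hden j
    field_simp
    ring
  have hx_pos : ∀ j, 0 < x j := fun j => div_pos hE₁ (hden j)
  have hc1 : ∀ j, 1 ≤ c j := fun j => by rw [hc_eq j]; linarith [hx_pos j]
  have he_pos : ∀ j, 0 < e j := by
    intro j
    have hj : (0:ℝ) ≤ (j:ℝ) := Nat.cast_nonneg j
    have h1 : (0:ℝ) < (j:ℝ)+r-1 := by linarith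
    have h2 : (0:ℝ) < (j:ℝ)+r := by linarith
    exact div_pos hE₂ (mul_pos h1 h2)
  set P : ℕ → ℝ := fun k => ∏ j ∈ Finset.range k, c j with hP
  set S : ℕ → ℝ := fun k => ∑ j ∈ Finset.range k, e j with hS
  have hP1 : ∀ k, 1 ≤ P k := by
    intro k
    show (1:ℝ) ≤ ∏ j ∈ Finset.range k, c j
    induction k with
    | zero => simp
    | succ n ih =>
      rw [Finset.prod_range_succ]
      nlinarith [hc1 n]
  have hS0 : ∀ k, 0 ≤ S k := by
    intro k
    apply Finset.sum_nonneg
    intro j _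
    exact (he_pos j).le
  -- bound on partial sums of x
  set B₁ : ℝ := E₁/(r^2-1-E₁) + E₁ with hB₁
  have hrE : 0 < r^2 - 1 - E₁ := by nlinarith
  have hXsum : ∀ k, ∑ j ∈ Finset.range k, x j ≤ B₁ := by
    apply sum_tail_bound
    · positivity
    · exact hE₁.le
    · simp only [hx, Nat.cast_zero, zero_add]
      norm_num
    · intro j
      simp only [hx]
      apply div_le_div_of_nonneg_left hE₁.le (by positivity)
      have hj : (0:ℝ) ≤ (j:ℝ) := Nat.cast_nonneg j
      push_cast
      nlinarith
  -- bound on partial sums of e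
  set B₂ : ℝ := E₂/((r-1)*r) + E₂ with hB₂
  have hr0 : (0:ℝ) < (r-1)*r := by nlinarith
  have hSsum : ∀ k, S k ≤ B₂ := by
    apply sum_tail_bound
    · positivity
    · exact hE₂.le
    · simp only [he, Nat.cast_zero, zero_add]
      exact le_rfl
    · intro j
      simp only [he]
      apply div_le_div_of_nonneg_left hE₂.le (by positivity)
      have hj : (0:ℝ) ≤ (j:ℝ) := Nat.cast_nonneg j
      push_cast
      nlinarith
  -- bound on products
  have hPexp : ∀ k, P k ≤ Real.exp B₁ := by
    intro k
    have h1 : P k ≤ Real.exp (∑ j ∈ Finset.range k, x j) := by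
      rw [Real.exp_sum]
      apply Finset.prod_le_prod
      · intro j _; linarith [hc1 j]
      · intro j _
        rw [hc_eq j]
        have := Real.add_one_le_exp (x j)
        linarith
    exact h1.trans (Real.exp_le_exp.mpr (hXsum k))
  -- main induction
  have main : ∀ k, a k ≤ P k * (1 + S k) * a 0 := by
    intro k
    induction k with
    | zero =>
      simp only [hP, hS, Finset.range_zero, Finset.prod_empty, Finset.sum_empty]
      linarith [ha 0]
    | succ n ih =>
      have hDn := hD n
      have hdenn := hden n
      have hstep : a (n+1) ≤ c n * (e n * a 0 + a n) := by
        have h1 := hrec n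
        have h2 : c n * ((1 - E₁/(((n:ℝ)+r)^2 - 1)) * a (n+1)) = a (n+1) := by
          simp only [hc]
          field_simp
        calc a (n+1) = c n * ((1 - E₁/(((n:ℝ)+r)^2 - 1)) * a (n+1)) := h2.symm
          _ ≤ c n * (E₂/(((n:ℝ)+r-1)*((n:ℝ)+r)) * a 0 + a n) :=
              mul_le_mul_of_nonneg_left h1 (by linarith [hc1 n])
          _ = c n * (e n * a 0 + a n) := by simp only [he]
      have hPsucc : P (n+1) = P n * c n := Finset.prod_range_succ _ _
      have hSsucc : S (n+1) = S n + e n := Finset.sum_range_succ _ _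
      rw [hPsucc, hSsucc]
      have hcn := hc1 n
      have hen := he_pos n
      have hPn := hP1 n
      have hSn := hS0 n
      have ha0 := ha 0
      have han := ha n
      have h3 : c n * a n ≤ c n * (P n * (1 + S n) * a 0) :=
        mul_le_mul_of_nonneg_left ih (by linarith)
      nlinarith [mul_nonneg (mul_nonneg (by linarith : (0:ℝ) ≤ c n) hen.le) ha0,
                 mul_le_mul_of_nonneg_left hPn (mul_nonneg (mul_nonneg (by linarith : (0:ℝ) ≤ c n) hen.le) ha0)]
  refine ⟨Real.exp B₁ * (1 + B₂), ?_, ?_⟩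
  · have : 0 < B₂ := by positivity
    positivity
  · intro k _
    have h1 := main k
    have h2 : P k * (1 + S k) ≤ Real.exp B₁ * (1 + B₂) := by
      apply mul_le_mul (hPexp k) (by linarith [hSsum k]) (by linarith [hS0 k]) (Real.exp_pos _).le
    calc a k ≤ P k * (1 + S k) * a 0 := h1
      _ ≤ Real.exp B₁ * (1 + B₂) * a 0 := mul_le_mul_of_nonneg_right h2 (ha 0)
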